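/- Let I_l, I_c, I_r be three intervals from the family with I_l to the left of I_c and I_r to the right of I_c. If (1/|I_c|)Σ_{t_i∈I_c} y(t_i) − σ√(3 log n)/√|I_c| ≥ max{ (1/|I_l|)Σ_{t_i∈I_l} y(t_i) + σ√(3 log n)/√|I_l|, (1/|I_r|)Σ_{t_i∈I_r} y(t_i) + σ√(3 log n)/√|I_r| } holds strictly, then every function g in A_n attains a local maximum over the design points in I_l ∪ I_c ∪ I_r, in the sense that there exist design points s ∈ I_l, t ∈ I_c, u ∈ I_r with s < t < u, g(t) > g(s) and g(t) > g(u). -/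

import Mathlib

/-- if the averaged data on a central interval exceeds (strictly) the
averaged data on flanking intervals by the noise margins, then every function `g` in
the confidence region `A_n` has a local maximum over the design points in
`I_l ∪ I_c ∪ I_r`. -/
theorem stmt2 (n : ℕ) (hn : 2 ≤ n) (σ : ℝ) (hσ : 0 < σ)
    (y g : ℕ → ℝ) (𝓘 : Set (Finset ℕ))
    (hA : ∀ I ∈ 𝓘, |∑ i ∈ I, (y i - g i)| ≤ σ * Real.sqrt (3 * Real.log n) * Real.sqrt I.card)
    (Il Ic Ir : Finset ℕ) (hIl : Il ∈ 𝓘) (hIc : Ic ∈ 𝓘) (hIr : Ir ∈ 𝓘)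
    (hl : Il.Nonempty) (hc : Ic.Nonempty) (hr : Ir.Nonempty)
    (hlc : ∀ s ∈ Il, ∀ t ∈ Ic, s < t) (hcr : ∀ t ∈ Ic, ∀ u ∈ Ir, t < u)
    (hgap :
      (∑ i ∈ Ic, y i) / Ic.card - σ * Real.sqrt (3 * Real.log n) / Real.sqrt Ic.card >
        max ((∑ i ∈ Il, y i) / Il.card + σ * Real.sqrt (3 * Real.log n) / Real.sqrt Il.card)
            ((∑ i ∈ Ir, y i) / Ir.card + σ * Real.sqrt (3 * Real.log n) / Real.sqrt Ir.card)) :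
    ∃ s ∈ Il, ∃ t ∈ Ic, ∃ u ∈ Ir, s < t ∧ t < u ∧ g s < g t ∧ g u < g t := by
  set M := σ * Real.sqrt (3 * Real.log n) with hM
  have key : ∀ I ∈ 𝓘, I.Nonempty →
      |(∑ i ∈ I, y i) / I.card - (∑ i ∈ I, g i) / I.card| ≤ M / Real.sqrt I.card := by
    intro I hI hne
    have hcard : (0:ℝ) < I.card := by exact_mod_cast Finset.card_pos.mpr hne
    have hs : (0:ℝ) < Real.sqrt I.card := Real.sqrt_pos.mpr hcard
    have h := hA I hI
    rw [Finset.sum_sub_distrib] at h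
    have : |(∑ i ∈ I, y i) / I.card - (∑ i ∈ I, g i) / I.card|
        = |(∑ i ∈ I, y i) - (∑ i ∈ I, g i)| / I.card := by
      rw [div_sub_div_same, abs_div, abs_of_pos hcard]
    rw [this]
    rw [div_le_div_iff₀ hcard hs]
    calc |(∑ i ∈ I, y i) - (∑ i ∈ I, g i)| * Real.sqrt I.card
        ≤ M * Real.sqrt I.card * Real.sqrt I.card := by
          exact mul_le_mul_of_nonneg_right h hs.le
      _ = M * I.card := by
          rw [mul_assoc, Real.mul_self_sqrt hcard.le]
  -- averages of g
  have hll := key Il hIl hl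
  have hcc := key Ic hIc hc
  have hrr := key Ir hIr hr
  have hgl : (∑ i ∈ Il, g i) / Il.card ≤ (∑ i ∈ Il, y i) / Il.card + M / Real.sqrt Il.card := by
    have := (abs_le.mp hll).1; linarith
  have hgr : (∑ i ∈ Ir, g i) / Ir.card ≤ (∑ i ∈ Ir, y i) / Ir.card + M / Real.sqrt Ir.card := by
    have := (abs_le.mp hrr).1; linarith
  have hgc : (∑ i ∈ Ic, y i) / Ic.card - M / Real.sqrt Ic.card ≤ (∑ i ∈ Ic, g i) / Ic.card := by
    have := (abs_le.mp hcc).2; linarith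
  have hmaxl := le_max_left ((∑ i ∈ Il, y i) / Il.card + M / Real.sqrt Il.card)
      ((∑ i ∈ Ir, y i) / Ir.card + M / Real.sqrt Ir.card)
  have hmaxr := le_max_right ((∑ i ∈ Il, y i) / Il.card + M / Real.sqrt Il.card)
      ((∑ i ∈ Ir, y i) / Ir.card + M / Real.sqrt Ir.card)
  have hcl : (∑ i ∈ Il, g i) / Il.card < (∑ i ∈ Ic, g i) / Ic.card := by
    have h1 := lt_of_le_of_lt hmaxl hgap; linarith
  have hcr' : (∑ i ∈ Ir, g i) / Ir.card < (∑ i ∈ Ic, g i) / Ic.card := by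
    have h1 := lt_of_le_of_lt hmaxr hgap; linarith
  -- pick t ∈ Ic with g t ≥ average
  have hcardc : (0:ℝ) < Ic.card := by exact_mod_cast Finset.card_pos.mpr hc
  obtain ⟨t, ht, hgt⟩ : ∃ t ∈ Ic, (∑ i ∈ Ic, g i) / Ic.card ≤ g t := by
    by_contra hcon
    push_neg at hcon
    have := Finset.sum_lt_sum_of_nonempty hc hcon
    rw [Finset.sum_const, nsmul_eq_mul] at this
    rw [mul_comm, div_mul_cancel₀ _ (ne_of_gt hcardc)] at this
    exact lt_irrefl _ this
  have hcardl : (0:ℝ) < Il.card := by exact_mod_cast Finset.card_pos.mpr hl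
  obtain ⟨s, hs, hgs⟩ : ∃ s ∈ Il, g s ≤ (∑ i ∈ Il, g i) / Il.card := by
    by_contra hcon
    push_neg at hcon
    have := Finset.sum_lt_sum_of_nonempty hl hcon
    rw [Finset.sum_const, nsmul_eq_mul] at this
    rw [mul_comm, div_mul_cancel₀ _ (ne_of_gt hcardl)] at this
    exact lt_irrefl _ this
  have hcardr : (0:ℝ) < Ir.card := by exact_mod_cast Finset.card_pos.mpr hr
  obtain ⟨u, hu, hgu⟩ : ∃ u ∈ Ir, g u ≤ (∑ i ∈ Ir, g i) / Ir.card := by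
    by_contra hcon
    push_neg at hcon
    have := Finset.sum_lt_sum_of_nonempty hr hcon
    rw [Finset.sum_const, nsmul_eq_mul] at this
    rw [mul_comm, div_mul_cancel₀ _ (ne_of_gt hcardr)] at this
    exact lt_irrefl _ this
  exact ⟨s, hs, t, ht, u, hu, hlc s hs t ht, hcr t ht u hu,
    lt_of_le_of_lt hgs (lt_of_lt_of_le hcl hgt),
    lt_of_le_of_lt hgu (lt_of_lt_of_le hcr' hgt)⟩
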